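/- The group Sp(4, ℤ/2ℤ) is isomorphic to the symmetric group on 6 letters. -/

import Mathlib

open Matrix

namespace Sp4S6

abbrev F := ZMod 2
abbrev ι := Fin 2 ⊕ Fin 2
abbrev G := Matrix.symplecticGroup (Fin 2) (ZMod 2)

instance : DecidablePred (· ∈ G) :=
  fun _A => decidable_of_iff _ SymplecticGroup.mem_iff.symm

abbrev l0 : ι := Sum.inl 0
abbrev l1 : ι := Sum.inl 1
abbrev r0 : ι := Sum.inr 0
abbrev r1 : ι := Sum.inr 1

/-! ### The symplectic pairing of rows -/

def sZ (x y : ι → F) : F :=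
  x l0 * y r0 + x l1 * y r1 + x r0 * y l0 + x r1 * y l1

lemma entry_eq (A : Matrix ι ι F) (i k : ι) :
    (A * J (Fin 2) F * Aᵀ) i k = sZ (A i) (A k) := by
  simp [Matrix.mul_apply, Matrix.transpose_apply, Fintype.sum_sum_type, Fin.sum_univ_two,
    Matrix.J, Matrix.fromBlocks_apply₁₁, Matrix.fromBlocks_apply₁₂,
    Matrix.fromBlocks_apply₂₁, Matrix.fromBlocks_apply₂₂, Matrix.one_apply,
    Matrix.neg_apply, sZ]
  have hneg : ∀ x : F, -x = x := by decide
  ring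

lemma mem_sZ (A : Matrix ι ι F) :
    A ∈ G ↔ ∀ i k, sZ (A i) (A k) = J (Fin 2) F i k := by
  rw [SymplecticGroup.mem_iff]
  constructor
  · intro h i k; rw [← entry_eq, h]
  · intro h; ext i k; rw [entry_eq]; exact h i k

lemma sZ_self (x : ι → F) : sZ x x = 0 := by
  have h : ∀ a b c d : F, a * c + b * d + c * a + d * b = 0 := by decide
  exact h (x l0) (x l1) (x r0) (x r1)

lemma sZ_comm (x y : ι → F) : sZ x y = sZ y x := by
  have h : ∀ a b c d a' b' c' d' : F,
      a * c' + b * d' + c * a' + d * b' = a' * c + b' * d + c' * a + d' * b := by decide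
  exact h (x l0) (x l1) (x r0) (x r1) (y l0) (y l1) (y r0) (y r1)

def pZ (A : Matrix ι ι F) : Prop :=
  sZ (A l0) (A l1) = 0 ∧ sZ (A l0) (A r0) = 1 ∧ sZ (A l0) (A r1) = 0 ∧
  sZ (A l1) (A r0) = 0 ∧ sZ (A l1) (A r1) = 1 ∧ sZ (A r0) (A r1) = 0

lemma mem_pZ (A : Matrix ι ι F) : A ∈ G ↔ pZ A := by
  rw [mem_sZ]
  constructor
  · intro h
    exact ⟨(h l0 l1).trans (by decide), (h l0 r0).trans (by decide),
      (h l0 r1).trans (by decide), (h l1 r0).trans (by decide),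
      (h l1 r1).trans (by decide), (h r0 r1).trans (by decide)⟩
  · rintro ⟨h1, h2, h3, h4, h5, h6⟩ i k
    rcases i with a | a <;> fin_cases a <;> rcases k with b | b <;> fin_cases b
    · exact (sZ_self _).trans (by decide)
    · exact h1.trans (by decide)
    · exact h2.trans (by decide)
    · exact h3.trans (by decide)
    · exact ((sZ_comm _ _).trans h1).trans (by decide)
    · exact (sZ_self _).trans (by decide)
    · exact h4.trans (by decide)
    · exact h5.trans (by decide)
    · exact ((sZ_comm _ _).trans h2).trans (by decide)
    · exact ((sZ_comm _ _).trans h4).trans (by decide)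
    · exact (sZ_self _).trans (by decide)
    · exact h6.trans (by decide)
    · exact ((sZ_comm _ _).trans h3).trans (by decide)
    · exact ((sZ_comm _ _).trans h5).trans (by decide)
    · exact ((sZ_comm _ _).trans h6).trans (by decide)
    · exact (sZ_self _).trans (by decide)

/-! ### Transfer to Bool tuples and counting -/

abbrev B4 := Bool × Bool × Bool × Bool
abbrev T16 := B4 × B4 × B4 × B4

def sB (x y : B4) : Bool :=
  ((x.1 && y.2.2.1) != (x.2.1 && y.2.2.2)) != ((x.2.2.1 && y.1) != (x.2.2.2 && y.2.1))

def pB (r : T16) : Prop :=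
  sB r.1 r.2.1 = false ∧ sB r.1 r.2.2.1 = true ∧ sB r.1 r.2.2.2 = false ∧
  sB r.2.1 r.2.2.1 = false ∧ sB r.2.1 r.2.2.2 = true ∧ sB r.2.2.1 r.2.2.2 = false

instance : DecidablePred pB := fun r => by unfold pB; infer_instance

def z2b (x : F) : Bool := decide (x = 1)
def b2z (b : Bool) : F := bif b then 1 else 0

def rowB (x : ι → F) : B4 := (z2b (x l0), z2b (x l1), z2b (x r0), z2b (x r1))

def rowZ (v : B4) : ι → F := fun j =>
  Sum.elim (fun a : Fin 2 => if a = 0 then b2z v.1 else b2z v.2.1)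
    (fun a : Fin 2 => if a = 0 then b2z v.2.2.1 else b2z v.2.2.2) j

def mEquiv : Matrix ι ι F ≃ T16 where
  toFun A := (rowB (A l0), rowB (A l1), rowB (A r0), rowB (A r1))
  invFun r := Matrix.of fun i =>
    Sum.elim (fun a : Fin 2 => if a = 0 then rowZ r.1 else rowZ r.2.1)
      (fun a : Fin 2 => if a = 0 then rowZ r.2.2.1 else rowZ r.2.2.2) i
  left_inv A := by
    have hz : ∀ x : F, b2z (z2b x) = x := by decide
    funext i j
    rcases i with a | a <;> fin_cases a <;> rcases j with b | b <;> fin_cases b <;>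
      simp [rowZ, rowB, hz]
  right_inv r := by
    have hb : ∀ b : Bool, z2b (b2z b) = b := by decide
    obtain ⟨⟨a1, a2, a3, a4⟩, ⟨b1, b2, b3, b4⟩, ⟨c1, c2, c3, c4⟩, d1, d2, d3, d4⟩ := r
    simp [rowB, rowZ, hb]

lemma sB_rowB (x y : ι → F) : sB (rowB x) (rowB y) = z2b (sZ x y) := by
  have key : ∀ a b c d a' b' c' d' : F,
      sB (z2b a, z2b b, z2b c, z2b d) (z2b a', z2b b', z2b c', z2b d') =
        z2b (a * c' + b * d' + c * a' + d * b') := by decide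
  exact key (x l0) (x l1) (x r0) (x r1) (y l0) (y l1) (y r0) (y r1)

lemma mem_pB (A : Matrix ι ι F) : A ∈ G ↔ pB (mEquiv A) := by
  rw [mem_pZ]
  have hf : ∀ x : F, z2b x = false ↔ x = 0 := by decide
  have ht : ∀ x : F, z2b x = true ↔ x = 1 := by decide
  show pZ A ↔ pB (rowB (A l0), rowB (A l1), rowB (A r0), rowB (A r1))
  unfold pZ pB
  simp only [sB_rowB, hf, ht]

lemma card_pB : Fintype.card {r : T16 // pB r} =
    ∑ r1 : B4, ∑ r3 : B4, (if sB r1 r3 = true then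
      ∑ r2 : B4, (if (sB r1 r2 = false ∧ sB r2 r3 = false) then
        ∑ r4 : B4, (if (sB r1 r4 = false ∧ sB r2 r4 = true ∧ sB r3 r4 = false) then 1 else 0)
       else 0) else 0) := by
  rw [Fintype.card_subtype, Finset.card_filter]
  simp only [Fintype.sum_prod_type (α₁ := B4) (α₂ := B4 × B4 × B4),
    Fintype.sum_prod_type (α₁ := B4) (α₂ := B4 × B4),
    Fintype.sum_prod_type (α₁ := B4) (α₂ := B4)]
  refine Finset.sum_congr rfl fun x1 _ => ?_
  rw [Finset.sum_comm]
  refine Finset.sum_congr rfl fun x3 _ => ?_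
  by_cases h13 : sB x1 x3 = true
  · rw [if_pos h13]
    refine Finset.sum_congr rfl fun x2 _ => ?_
    by_cases h2 : sB x1 x2 = false ∧ sB x2 x3 = false
    · rw [if_pos h2]
      refine Finset.sum_congr rfl fun x4 _ => ?_
      by_cases h4 : sB x1 x4 = false ∧ sB x2 x4 = true ∧ sB x3 x4 = false
      · rw [if_pos h4, if_pos (show pB (x1, x2, x3, x4) from
          ⟨h2.1, h13, h4.1, h2.2, h4.2.1, h4.2.2⟩)]
      · rw [if_neg h4, if_neg (show ¬ pB (x1, x2, x3, x4) from fun h =>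
          h4 ⟨h.2.2.1, h.2.2.2.2.1, h.2.2.2.2.2⟩)]
    · rw [if_neg h2]
      refine Finset.sum_eq_zero fun x4 _ => ?_
      exact if_neg (show ¬ pB (x1, x2, x3, x4) from fun h => h2 ⟨h.1, h.2.2.2.1⟩)
  · rw [if_neg h13]
    refine Finset.sum_eq_zero fun x2 _ => Finset.sum_eq_zero fun x4 _ => ?_
    exact if_neg (show ¬ pB (x1, x2, x3, x4) from fun h => h13 h.2.1)

set_option maxRecDepth 100000 in
set_option maxHeartbeats 4000000 in
lemma sum_val : (∑ r1 : B4, ∑ r3 : B4, (if sB r1 r3 = true then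
      ∑ r2 : B4, (if (sB r1 r2 = false ∧ sB r2 r3 = false) then
        ∑ r4 : B4, (if (sB r1 r4 = false ∧ sB r2 r4 = true ∧ sB r3 r4 = false) then 1 else 0)
       else 0) else 0)) = 720 := by decide

lemma cardG : Fintype.card G = 720 := by
  rw [Fintype.card_congr (Equiv.subtypeEquiv mEquiv mem_pB)]
  rw [card_pB, sum_val]

/-! ### The explicit monoid hom from `Perm (Fin 6)` -/

def Pm : Matrix ι (Fin 6) F := Matrix.of (Sum.elim
  (fun a : Fin 2 => if a = 0 then ![0,1,0,0,0,1] else ![0,0,0,1,1,0])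
  (fun a : Fin 2 => if a = 0 then ![0,1,1,1,1,0] else ![0,0,1,1,0,0]))

def Qm : Matrix (Fin 6) ι F := (Matrix.of (Sum.elim
  (fun a : Fin 2 => if a = 0 then ![1,0,0,0,0,1] else ![0,0,1,1,0,0])
  (fun a : Fin 2 => if a = 0 then ![0,1,0,0,0,1] else ![1,1,1,0,0,1])))ᵀ

def uv : Fin 6 → F := fun _ => 1
def av : Fin 6 → F := ![0,0,0,0,1,0]
def bv : Fin 6 → F := ![1,0,0,0,0,0]
def cv : Fin 6 → F := ![0,1,1,1,1,1]
def dv : Fin 6 → F := ![1,0,0,0,0,0]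

lemma hPu : Pm *ᵥ uv = 0 := by decide
lemma huQ : uv ᵥ* Qm = 0 := by decide
lemma hQtu : Qmᵀ *ᵥ uv = 0 := by decide
lemma hQP : Qm * Pm = 1 + vecMulVec uv av + vecMulVec bv uv := by decide
lemma hPJP : Pmᵀ * J (Fin 2) F * Pm = 1 + vecMulVec uv cv + vecMulVec dv uv := by decide
lemma hQQ : Qmᵀ * Qm = J (Fin 2) F := by decide

def permMat (σ : Equiv.Perm (Fin 6)) : Matrix (Fin 6) (Fin 6) F :=
  Matrix.of fun i j => if σ j = i then 1 else 0

lemma permMat_mul (σ τ : Equiv.Perm (Fin 6)) :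
    permMat (σ * τ) = permMat σ * permMat τ := by
  ext i j
  simp [permMat, Matrix.mul_apply, mul_ite, mul_one, mul_zero, ite_mul, zero_mul, one_mul,
    Finset.sum_ite_eq, Equiv.Perm.mul_apply]
  congr

lemma permMat_one : permMat 1 = 1 := by
  ext i j
  simp [permMat, Matrix.one_apply, eq_comm]

lemma permMat_transpose (σ : Equiv.Perm (Fin 6)) : (permMat σ)ᵀ = permMat σ⁻¹ := by
  ext i j
  simp only [permMat, Matrix.transpose_apply, Matrix.of_apply]
  congr 1
  rw [eq_iff_iff]
  constructor <;> intro h <;> simp [← h]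

lemma permMat_mulVec_u (σ : Equiv.Perm (Fin 6)) : permMat σ *ᵥ uv = uv := by
  funext i
  simp [permMat, Matrix.mulVec, dotProduct, uv, Equiv.apply_eq_iff_eq_symm_apply,
    Finset.sum_ite_eq']

lemma permMat_vecMul_u (σ : Equiv.Perm (Fin 6)) : uv ᵥ* permMat σ = uv := by
  funext j
  simp [permMat, Matrix.vecMul, dotProduct, uv, Finset.sum_ite_eq]

lemma mul_vvm {n m k : Type*} [Fintype m] (A : Matrix n m F) (x : m → F) (y : k → F) :
    A * vecMulVec x y = vecMulVec (A *ᵥ x) y := by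
  ext i j
  simp [Matrix.mul_apply, Matrix.vecMulVec_apply, Matrix.mulVec, dotProduct,
    Finset.sum_mul, mul_assoc]

lemma vvm_mul {n m k : Type*} [Fintype m] (x : n → F) (y : m → F) (A : Matrix m k F) :
    vecMulVec x y * A = vecMulVec x (y ᵥ* A) := by
  ext i j
  simp [Matrix.mul_apply, Matrix.vecMulVec_apply, Matrix.vecMul, dotProduct,
    Finset.mul_sum, mul_assoc]

lemma vvm_zero_left {n k : Type*} (y : k → F) :
    vecMulVec (0 : n → F) y = 0 := by
  ext i j; simp [Matrix.vecMulVec_apply]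

lemma vvm_zero_right {n k : Type*} (x : n → F) :
    vecMulVec x (0 : k → F) = 0 := by
  ext i j; simp [Matrix.vecMulVec_apply]

def Tmat (σ : Equiv.Perm (Fin 6)) : Matrix ι ι F := Pm * permMat σ * Qm

lemma key_mul (σ τ : Equiv.Perm (Fin 6)) :
    Pm * permMat σ * (Qm * Pm) * permMat τ * Qm = Pm * (permMat σ * permMat τ) * Qm := by
  rw [hQP]
  simp only [Matrix.mul_add, Matrix.add_mul, Matrix.mul_one]
  rw [mul_vvm, ← Matrix.mulVec_mulVec, permMat_mulVec_u, hPu, vvm_zero_left,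
    Matrix.zero_mul, Matrix.zero_mul, mul_vvm, vvm_mul, permMat_vecMul_u, vvm_mul, huQ,
    vvm_zero_right, add_zero, add_zero]
  simp only [Matrix.mul_assoc]

lemma Tmat_mul (σ τ : Equiv.Perm (Fin 6)) : Tmat (σ * τ) = Tmat σ * Tmat τ := by
  unfold Tmat
  rw [permMat_mul, ← key_mul σ τ]
  simp only [Matrix.mul_assoc]

lemma key_mem (σ : Equiv.Perm (Fin 6)) :
    Qmᵀ * permMat σ⁻¹ * (Pmᵀ * J (Fin 2) F * Pm) * permMat σ * Qm = J (Fin 2) F := by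
  rw [hPJP]
  simp only [Matrix.mul_add, Matrix.add_mul, Matrix.mul_one]
  rw [mul_vvm, ← Matrix.mulVec_mulVec, permMat_mulVec_u, hQtu, vvm_zero_left,
    Matrix.zero_mul, Matrix.zero_mul, mul_vvm, vvm_mul, permMat_vecMul_u, vvm_mul, huQ,
    vvm_zero_right, add_zero, add_zero]
  rw [Matrix.mul_assoc (Qmᵀ) (permMat σ⁻¹) (permMat σ), ← permMat_mul, inv_mul_cancel,
    permMat_one, Matrix.mul_one, hQQ]

lemma Tmat_mem (σ : Equiv.Perm (Fin 6)) : Tmat σ ∈ G := by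
  rw [SymplecticGroup.mem_iff']
  conv_rhs => rw [← key_mem σ]
  unfold Tmat
  simp only [Matrix.transpose_mul, permMat_transpose, Matrix.mul_assoc]

def φ : Equiv.Perm (Fin 6) →* G :=
  MonoidHom.mk' (fun σ => ⟨Tmat σ, Tmat_mem σ⟩) (fun σ τ => Subtype.ext (Tmat_mul σ τ))

set_option maxRecDepth 100000 in
set_option maxHeartbeats 4000000 in
lemma inj_aux : ∀ σ : Equiv.Perm (Fin 6), Pm * permMat σ * Qm = 1 → σ = 1 := by decide

lemma card_perm6 : Fintype.card (Equiv.Perm (Fin 6)) = 720 := by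
  rw [Fintype.card_perm, Fintype.card_fin]
  decide

end Sp4S6

/-- The group `Sp(4, ℤ/2ℤ)` is isomorphic to the symmetric group on 6
letters. -/
theorem sp4_mod_two_iso_perm_six :
    Nonempty (Matrix.symplecticGroup (Fin 2) (ZMod 2) ≃* Equiv.Perm (Fin 6)) := by
  have hinj : Function.Injective Sp4S6.φ := by
    rw [injective_iff_map_eq_one]
    intro σ h
    exact Sp4S6.inj_aux σ (congrArg Subtype.val h)
  have hbij : Function.Bijective Sp4S6.φ :=
    (Fintype.bijective_iff_injective_and_card Sp4S6.φ).mpr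
      ⟨hinj, by rw [Sp4S6.card_perm6, Sp4S6.cardG]⟩
  exact ⟨(MulEquiv.ofBijective Sp4S6.φ hbij).symm⟩
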